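/- Let Q : X → A be a function into a commutative ring A and let T, M be functions from finite subsets of X to A related by the Möbius-type transform T(ϑ) = Σ_{υ⊆ϑ} M(υ)·Q(ϑ∖υ), where Q(κ) = ∏_{x∈κ} Q(x). Then M is recovered from T by the Meyer transform M(υ) = Σ_{ϑ⊆υ} T(ϑ)·(−Q)(υ∖ϑ), where (−Q)(κ) = ∏_{x∈κ}(−Q(x)). -/

import Mathlib

theorem meyer_inversion {X : Type*} [DecidableEq X] {A : Type*} [CommRing A]
    (Q : X → A) (T M : Finset X → A)
    (h : ∀ ϑ : Finset X, T ϑ = ∑ υ ∈ ϑ.powerset, M υ * ∏ x ∈ ϑ \ υ, Q x) :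
    ∀ υ : Finset X, M υ = ∑ ϑ ∈ υ.powerset, T ϑ * ∏ x ∈ υ \ ϑ, (-Q x) := by
  intro υ
  simp only [h, Finset.sum_mul]
  rw [Finset.sum_comm' (s' := fun τ => (υ.powerset).filter fun ϑ => τ ⊆ ϑ) (t' := υ.powerset)
      (by intro ϑ τ; simp [Finset.mem_filter]; tauto)]
  have key : ∀ τ ∈ υ.powerset,
      ∑ ϑ ∈ (υ.powerset).filter (fun ϑ => τ ⊆ ϑ),
        M τ * (∏ x ∈ ϑ \ τ, Q x) * ∏ x ∈ υ \ ϑ, (-Q x)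
      = if τ = υ then M τ else 0 := by
    intro τ hτ
    rw [Finset.mem_powerset] at hτ
    have himg : (υ.powerset).filter (fun ϑ => τ ⊆ ϑ)
        = ((υ \ τ).powerset).image (fun σ => τ ∪ σ) := by
      ext ϑ
      simp only [Finset.mem_filter, Finset.mem_powerset, Finset.mem_image]
      constructor
      · rintro ⟨h1, h2⟩
        exact ⟨ϑ \ τ, Finset.sdiff_subset_sdiff h1 le_rfl, by
          rw [Finset.union_sdiff_of_subset h2]⟩
      · rintro ⟨σ, hσ, rfl⟩
        rw [Finset.subset_sdiff] at hσ
        exact ⟨Finset.union_subset hτ hσ.1, Finset.subset_union_left⟩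
    rw [himg, Finset.sum_image (by
      intro a ha b hb hab
      rw [Finset.mem_coe, Finset.mem_powerset, Finset.subset_sdiff] at ha hb
      have : ∀ s t : Finset X, τ ∪ s = τ ∪ t → Disjoint s τ → Disjoint t τ →
          s ⊆ t := by
        intro s t hst hds hdt x hx
        have : x ∈ τ ∪ t := hst ▸ Finset.mem_union_right τ hx
        rcases Finset.mem_union.1 this with h' | h'
        · exact absurd h' (Finset.disjoint_left.1 hds hx)
        · exact h'
      exact le_antisymm (this a b hab ha.2 hb.2)
        (this b a hab.symm hb.2 ha.2))]
    have hsum : ∑ σ ∈ (υ \ τ).powerset,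
        M τ * (∏ x ∈ (τ ∪ σ) \ τ, Q x) * ∏ x ∈ υ \ (τ ∪ σ), (-Q x)
        = M τ * ∏ x ∈ υ \ τ, (Q x + (-Q x)) := by
      rw [Finset.prod_add, Finset.mul_sum]
      apply Finset.sum_congr rfl
      intro σ hσ
      rw [Finset.mem_powerset, Finset.subset_sdiff] at hσ
      have hd : υ \ (τ ∪ σ) = (υ \ τ) \ σ := by
        ext x; simp only [Finset.mem_sdiff, Finset.mem_union]; tauto
      rw [Finset.union_sdiff_cancel_left hσ.2.symm, hd, mul_assoc]
    rw [hsum]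
    simp only [add_neg_cancel, Finset.prod_const]
    rcases eq_or_ne τ υ with rfl | hne
    · simp
    · have : (υ \ τ).Nonempty := by
        rw [Finset.sdiff_nonempty]
        intro hle
        exact hne (le_antisymm hτ hle)
      rw [if_neg hne, zero_pow (by simpa [Finset.card_eq_zero, ← Finset.nonempty_iff_ne_empty]
        using this.card_pos.ne'), mul_zero]
  rw [Finset.sum_congr rfl key, Finset.sum_ite_eq' υ.powerset υ M]
  simp
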